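/- Let k ∈ ℕ, let S be a binary string of length ℓ ≥ 1, and let C be any binary string with |C| = |γ(S)| = (4k+12)ℓ + 2k+4. Then Ham(C, γ(S)) ≥ Ham(ψ(C), S). -/

import Mathlib

/-- Hamming distance between two (equal-length) strings:
the number of positions where they differ. -/
def ham : List Bool → List Bool → ℕ
  | x :: U, y :: V => (if x = y then 0 else 1) + ham U V
  | _, _ => 0

/-- The morphism `φ`: `φ(0) = 0^{2k+4} 1010 0^{2k+4}` and `φ(1) = 0^{2k+4} 1011 0^{2k+4}`,
with `0 ↦ false`, `1 ↦ true`. -/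
def phi (k : ℕ) (S : List Bool) : List Bool :=
  S.flatMap fun x =>
    List.replicate (2 * k + 4) false ++ [true, false, true, x] ++
      List.replicate (2 * k + 4) false

/-- `γ(S) = 1^{2k+4} · φ(S)`. -/
def gamma (k : ℕ) (S : List Bool) : List Bool :=
  List.replicate (2 * k + 4) true ++ phi k S

/-- `ψ(U)`: the binary string of length `ℓ` whose `j`-th letter is `U[(j+1)(4k+12) - 1]`. -/
def psi (k ℓ : ℕ) (U : List Bool) : List Bool :=
  (List.range ℓ).map fun j => U.getD ((j + 1) * (4 * k + 12) - 1) false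

lemma ham_append (A B U V : List Bool) (h : A.length = B.length) :
    ham (A ++ U) (B ++ V) = ham A B + ham U V := by
  induction A generalizing B with
  | nil => cases B with
    | nil => simp [ham]
    | cons b B => simp at h
  | cons a A ih =>
    cases B with
    | nil => simp at h
    | cons b B =>
      simp only [List.cons_append, ham, List.length_cons] at *
      rw [ih B (by omega)]; ring

lemma getD_le_ham (U V : List Bool) (i : ℕ) (hU : i < U.length) (hV : i < V.length) :
    (if U.getD i false = V.getD i false then 0 else 1) ≤ ham U V := by
  induction i generalizing U V with
  | zero =>
    cases U with
    | nil => simp at hU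
    | cons u U => cases V with
      | nil => simp at hV
      | cons v V => simp [ham]
  | succ i ih =>
    cases U with
    | nil => simp at hU
    | cons u U => cases V with
      | nil => simp at hV
      | cons v V =>
        simp only [List.getD_cons_succ, ham]
        have := ih U V (by simpa using hU) (by simpa using hV)
        omega

lemma phi_cons (k : ℕ) (x : Bool) (S : List Bool) :
    phi k (x :: S) = (List.replicate (2 * k + 4) false ++ [true, false, true, x] ++
      List.replicate (2 * k + 4) false) ++ phi k S := by
  simp [phi]

lemma key (k : ℕ) (S : List Bool) : ∀ C : List Bool,
    C.length = (4 * k + 12) * S.length →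
    ham ((List.range S.length).map fun j => C.getD (j * (4 * k + 12) + (2 * k + 7)) false) S
      ≤ ham C (phi k S) := by
  induction S with
  | nil => intro C h; simp [ham]
  | cons x S ih =>
    intro C h
    set B : List Bool := List.replicate (2 * k + 4) false ++ [true, false, true, x] ++
      List.replicate (2 * k + 4) false with hB
    have hBlen : B.length = 4 * k + 12 := by simp [hB]; omega
    have hClen : 4 * k + 12 ≤ C.length := by
      rw [h, List.length_cons]; nlinarith
    have hsplit : C = C.take (4 * k + 12) ++ C.drop (4 * k + 12) :=
      (List.take_append_drop _ _).symm
    set C1 := C.take (4 * k + 12) with hC1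
    set C2 := C.drop (4 * k + 12) with hC2
    have hC1len : C1.length = 4 * k + 12 := by
      rw [hC1, List.length_take]; omega
    have hC2len : C2.length = (4 * k + 12) * S.length := by
      rw [hC2, List.length_drop, h, List.length_cons]
      have : (4 * k + 12) * (S.length + 1) = (4 * k + 12) * S.length + (4 * k + 12) := by ring
      omega
    have hphi : phi k (x :: S) = B ++ phi k S := phi_cons k x S
    -- RHS decomposition
    have hRHS : ham C (phi k (x :: S)) = ham C1 B + ham C2 (phi k S) := by
      conv_lhs => rw [hsplit, hphi]
      exact ham_append _ _ _ _ (by rw [hC1len, hBlen])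
    -- LHS decomposition
    have hmap : ((List.range (S.length + 1)).map
          fun j => C.getD (j * (4 * k + 12) + (2 * k + 7)) false)
        = C.getD (2 * k + 7) false ::
          ((List.range S.length).map fun j => C2.getD (j * (4 * k + 12) + (2 * k + 7)) false) := by
      rw [List.range_succ_eq_map, List.map_cons, List.map_map]
      congr 1
      · simp
      · apply List.map_congr_left
        intro j _
        simp only [Function.comp]
        have harith : (j + 1) * (4 * k + 12) + (2 * k + 7)
            = (4 * k + 12) + (j * (4 * k + 12) + (2 * k + 7)) := by ring
        rw [harith, hsplit, List.getD_append_right _ _ _ _ (by omega)]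
        congr 1
        omega
    have hhead : C.getD (2 * k + 7) false = C1.getD (2 * k + 7) false := by
      conv_lhs => rw [hsplit]
      exact List.getD_append _ _ _ _ (by omega)
    have hBval : B.getD (2 * k + 7) false = x := by
      rw [hB, List.append_assoc,
        List.getD_append_right _ _ _ _ (by simp),
        List.length_replicate]
      have : 2 * k + 7 - (2 * k + 4) = 3 := by omega
      rw [this]
      rfl
    have hhd : (if C1.getD (2 * k + 7) false = x then 0 else 1) ≤ ham C1 B := by
      have := getD_le_ham C1 B (2 * k + 7) (by omega) (by omega)
      rwa [hBval] at this
    have htail := ih C2 hC2len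
    simp only [List.length_cons] at *
    rw [hmap, hRHS]
    show (if C.getD (2 * k + 7) false = x then 0 else 1) + _ ≤ _
    rw [hhead]
    omega

theorem stmt6 (k ℓ : ℕ) (hℓ : 1 ≤ ℓ) (S : List Bool) (hS : S.length = ℓ)
    (C : List Bool) (hC : C.length = (4 * k + 12) * ℓ + 2 * k + 4) :
    ham (psi k ℓ C) S ≤ ham C (gamma k S) := by
  subst hS
  have hClen : 2 * k + 4 ≤ C.length := by omega
  have hsplit : C = C.take (2 * k + 4) ++ C.drop (2 * k + 4) :=
    (List.take_append_drop _ _).symm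
  set C1 := C.take (2 * k + 4) with hC1
  set C2 := C.drop (2 * k + 4) with hC2
  have hC1len : C1.length = 2 * k + 4 := by rw [hC1, List.length_take]; omega
  have hC2len : C2.length = (4 * k + 12) * S.length := by
    rw [hC2, List.length_drop]; omega
  have hpsi : psi k S.length C
      = (List.range S.length).map fun j => C2.getD (j * (4 * k + 12) + (2 * k + 7)) false := by
    unfold psi
    apply List.map_congr_left
    intro j _
    have h1 : (j + 1) * (4 * k + 12) = j * (4 * k + 12) + (4 * k + 12) := by ring
    have h2 : (j + 1) * (4 * k + 12) - 1 = (2 * k + 4) + (j * (4 * k + 12) + (2 * k + 7)) := by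
      omega
    rw [h2]
    conv_lhs => rw [hsplit]
    rw [List.getD_append_right _ _ _ _ (by omega)]
    congr 1
    omega
  have hRHS : ham C (gamma k S)
      = ham C1 (List.replicate (2 * k + 4) true) + ham C2 (phi k S) := by
    conv_lhs => rw [hsplit]
    exact ham_append _ _ _ _ (by simp [hC1len])
  rw [hpsi, hRHS]
  have := key k S C2 hC2len
  omega
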